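/- arXiv:2303.11370 — 3 statements merged into one kernel-verified Lean document; each statement's English description precedes it below -/
import Mathlib

section
/- Define h : ℝ → ℝ by h(t) = 3(sin t − t cos t)/t³ for t ≠ 0. Then ∫₀^∞ h(t)² t dt = 9/4. -/
open MeasureTheory Real

section
open Filter Set

noncomputable def Ffun : ℝ → ℝ := fun t =>
  if t = 0 then 0 else
    9/4 - (9/4) * (((Real.sin t - t * Real.cos t) ^ 2 + t ^ 2 * Real.sin t ^ 2) / t ^ 4)

-- derivative of F at x > 0
lemma Ffun_hasDeriv {x : ℝ} (hx : 0 < x) :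
    HasDerivAt Ffun (9 * (Real.sin x - x * Real.cos x) ^ 2 / x ^ 5) x := by
  have hx0 : x ≠ 0 := ne_of_gt hx
  have hN : HasDerivAt (fun t => (Real.sin t - t * Real.cos t) ^ 2 + t ^ 2 * Real.sin t ^ 2)
      (2 * (Real.sin x - x * Real.cos x) * (x * Real.sin x)
        + (2 * x * Real.sin x ^ 2 + x ^ 2 * (2 * Real.sin x * Real.cos x))) x := by
    have h1 : HasDerivAt (fun t => Real.sin t - t * Real.cos t) (x * Real.sin x) x := by
      have : HasDerivAt (fun t => Real.sin t - t * Real.cos t) _ x := (Real.hasDerivAt_sin x).sub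
        ((hasDerivAt_id x).mul (Real.hasDerivAt_cos x))
      convert this using 1; simp [mul_comm]
    have h2 : HasDerivAt (fun t => (Real.sin t - t * Real.cos t) ^ 2) _ x := h1.pow 2
    have h3 : HasDerivAt (fun t : ℝ => t ^ 2 * Real.sin t ^ 2)
        (2 * x * Real.sin x ^ 2 + x ^ 2 * (2 * Real.sin x * Real.cos x)) x := by
      have : HasDerivAt (fun t : ℝ => t ^ 2 * Real.sin t ^ 2) _ x := (hasDerivAt_pow 2 x).mul ((Real.hasDerivAt_sin x).pow 2)
      convert this using 1; simp [mul_comm]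
    have h4 : HasDerivAt (fun t => (Real.sin t - t * Real.cos t) ^ 2 + t ^ 2 * Real.sin t ^ 2) _ x := h2.add h3
    convert h4 using 1; norm_num
  have hD : HasDerivAt (fun t : ℝ => t ^ 4) (4 * x ^ 3) x := by
    simpa using hasDerivAt_pow 4 x
  have hq : HasDerivAt (fun t => ((Real.sin t - t * Real.cos t) ^ 2 + t ^ 2 * Real.sin t ^ 2) / t ^ 4) _ x := hN.div hD (by positivity)
  have hmain := (hq.const_mul (9/4 : ℝ)).const_sub (9/4 : ℝ)
  have heq : Ffun =ᶠ[nhds x] (fun t =>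
      9/4 - (9/4) * (((Real.sin t - t * Real.cos t) ^ 2 + t ^ 2 * Real.sin t ^ 2) / t ^ 4)) := by
    filter_upwards [eventually_ne_nhds hx0] with t ht
    simp [Ffun, ht]
  refine (HasDerivAt.congr_of_eventuallyEq ?_ heq)
  convert hmain using 1
  field_simp
  ring

lemma tendsto_sin_div_zero_right :
    Tendsto (fun t => Real.sin t / t) (nhdsWithin 0 (Set.Ioi 0)) (nhds 1) := by
  have h := (hasDerivAt_iff_tendsto_slope.1 (Real.hasDerivAt_sin 0))
  rw [Real.cos_zero] at h
  have h2 : Tendsto (fun t => Real.sin t / t) (nhdsWithin 0 {(0:ℝ)}ᶜ) (nhds 1) := by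
    refine h.congr' ?_
    filter_upwards [self_mem_nhdsWithin] with t ht
    simp [slope, ht]
    ring
  exact h2.mono_left (nhdsWithin_mono _ (by intro t ht; exact ne_of_gt ht))

lemma tendsto_aux_zero :
    Tendsto (fun t => (Real.sin t - t * Real.cos t) / t ^ 2) (nhdsWithin 0 (Set.Ioi 0)) (nhds 0) := by
  apply HasDerivAt.lhopital_zero_nhdsGT (f' := fun t => t * Real.sin t) (g' := fun t => 2 * t)
  · filter_upwards with x
    have : HasDerivAt (fun t => Real.sin t - t * Real.cos t) _ x := (Real.hasDerivAt_sin x).sub ((hasDerivAt_id x).mul (Real.hasDerivAt_cos x))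
    convert this using 1; simp [mul_comm]
  · filter_upwards with x
    simpa using hasDerivAt_pow 2 x
  · filter_upwards [self_mem_nhdsWithin] with x hx
    have : (0:ℝ) < x := hx
    positivity
  · have : Tendsto (fun t => Real.sin t - t * Real.cos t) (nhdsWithin 0 (Set.Ioi 0)) (nhds 0) := by
      have : Filter.Tendsto (fun t => Real.sin t - t * Real.cos t) _ _ := ((Real.continuous_sin.sub (continuous_id.mul Real.continuous_cos)).tendsto 0)
      simpa using this.mono_left nhdsWithin_le_nhds
    exact this
  · have := ((continuous_pow 2).tendsto (0:ℝ)).mono_left (nhdsWithin_le_nhds (s := Set.Ioi 0))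
    simpa using this
  · have : Tendsto (fun t : ℝ => Real.sin t / 2) (nhdsWithin 0 (Set.Ioi 0)) (nhds 0) := by
      have := (Real.continuous_sin.tendsto 0).mono_left (nhdsWithin_le_nhds (s := Set.Ioi 0))
      simpa using this.div_const 2
    refine this.congr' ?_
    filter_upwards [self_mem_nhdsWithin] with x hx
    have : (x:ℝ) ≠ 0 := ne_of_gt hx
    field_simp

lemma Ffun_cont_zero : ContinuousWithinAt Ffun (Set.Ici 0) 0 := by
  rw [← continuousWithinAt_Ioi_iff_Ici]
  have hF0 : Ffun 0 = 0 := by simp [Ffun]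
  unfold ContinuousWithinAt
  rw [hF0]
  have key : Tendsto (fun t => 9/4 - (9/4) * (((Real.sin t - t * Real.cos t) / t ^ 2) ^ 2
      + (Real.sin t / t) ^ 2)) (nhdsWithin 0 (Set.Ioi 0)) (nhds 0) := by
    have h1 := tendsto_aux_zero.pow 2
    have h2 := tendsto_sin_div_zero_right.pow 2
    have := ((h1.add h2).const_mul (9/4 : ℝ)).const_sub (9/4 : ℝ)
    norm_num at this ⊢
    exact this
  refine key.congr' ?_
  filter_upwards [self_mem_nhdsWithin] with t ht
  have ht0 : t ≠ 0 := ne_of_gt ht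
  simp only [Ffun, if_neg ht0]
  field_simp

lemma Ffun_atTop : Tendsto Ffun atTop (nhds (9/4)) := by
  have h1 : Tendsto (fun t : ℝ => (Real.sin t - t * Real.cos t) / t ^ 2) atTop (nhds 0) := by
    apply squeeze_zero_norm' (a := fun t : ℝ => 2 / t)
    · filter_upwards [eventually_ge_atTop (1:ℝ)] with t ht
      have ht0 : (0:ℝ) < t := lt_of_lt_of_le one_pos ht
      have hb : |Real.sin t - t * Real.cos t| ≤ 2 * t := by
        calc |Real.sin t - t * Real.cos t| ≤ |Real.sin t| + |t * Real.cos t| := abs_sub _ _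
        _ ≤ 1 + t * 1 := by
            apply add_le_add (Real.abs_sin_le_one t)
            rw [abs_mul, abs_of_pos ht0]
            exact mul_le_mul_of_nonneg_left (Real.abs_cos_le_one t) ht0.le
        _ ≤ 2 * t := by nlinarith
      rw [Real.norm_eq_abs, abs_div, abs_of_pos (by positivity : (0:ℝ) < t ^ 2)]
      rw [div_le_div_iff₀ (by positivity) ht0]
      calc |Real.sin t - t * Real.cos t| * t ≤ (2 * t) * t :=
            mul_le_mul_of_nonneg_right hb ht0.le
      _ = 2 * t ^ 2 := by ring
    · simpa [div_eq_mul_inv] using tendsto_inv_atTop_zero.const_mul (2:ℝ)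
  have h2 : Tendsto (fun t : ℝ => Real.sin t / t) atTop (nhds 0) := by
    apply squeeze_zero_norm' (a := fun t : ℝ => 1 / t)
    · filter_upwards [eventually_gt_atTop (0:ℝ)] with t ht
      rw [Real.norm_eq_abs, abs_div, abs_of_pos ht]
      gcongr
      exact Real.abs_sin_le_one t
    · simpa using tendsto_inv_atTop_zero.const_mul (1:ℝ)
  have key : Tendsto (fun t => 9/4 - (9/4) * (((Real.sin t - t * Real.cos t) / t ^ 2) ^ 2
      + (Real.sin t / t) ^ 2)) atTop (nhds (9/4)) := by
    have := (((h1.pow 2).add (h2.pow 2)).const_mul (9/4 : ℝ)).const_sub (9/4 : ℝ)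
    norm_num at this
    exact this
  refine key.congr' ?_
  filter_upwards [eventually_gt_atTop (0:ℝ)] with t ht
  have ht0 : t ≠ 0 := ne_of_gt ht
  simp only [Ffun, if_neg ht0]
  field_simp

end

/-- With `h t = 3(sin t − t cos t)/t³`, one has `∫₀^∞ h(t)² t dt = 9/4`. -/
theorem integral_h_sq_mul_self (h : ℝ → ℝ)
    (hh : ∀ t : ℝ, t ≠ 0 → h t = 3 * (Real.sin t - t * Real.cos t) / t ^ 3) :
    ∫ t in Set.Ioi (0 : ℝ), (h t) ^ 2 * t = 9 / 4 := by
  have hderiv : ∀ x ∈ Set.Ioi (0:ℝ), HasDerivAt Ffun ((h x) ^ 2 * x) x := by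
    intro x hx
    have hx0 : (0:ℝ) < x := hx
    have := Ffun_hasDeriv hx0
    convert this using 1
    rw [hh x (ne_of_gt hx0)]
    field_simp
    ring
  have hnonneg : ∀ x ∈ Set.Ioi (0:ℝ), 0 ≤ (h x) ^ 2 * x := by
    intro x hx
    have hx0 : (0:ℝ) < x := hx
    positivity
  have := MeasureTheory.integral_Ioi_of_hasDerivAt_of_nonneg Ffun_cont_zero hderiv hnonneg Ffun_atTop
  rw [this]
  simp [Ffun]
end

section
/- Define h : ℝ → ℝ by h(t) = 3(sin t − t cos t)/t³ for t ≠ 0. Then ∫₀^∞ h(t)² t² dt = 3π/2. -/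
open MeasureTheory Real Set intervalIntegral AddCircle
open scoped ENNReal


noncomputable def gg : ℝ → ℝ := fun t => (Real.sin t - t * Real.cos t) / t ^ 2

lemma gg_zero : gg 0 = 0 := by simp [gg]

lemma key_hasDerivAt {c : ℂ} (hc : c ≠ 0) (x : ℝ) :
    HasDerivAt (fun y : ℝ => Complex.exp (c * y) * (y / c - 1 / c ^ 2))
      ((x : ℂ) * Complex.exp (c * x)) x := by
  have h0 : HasDerivAt (fun y : ℝ => (y : ℂ)) 1 x := Complex.ofRealCLM.hasDerivAt
  have h1 : HasDerivAt (fun y : ℝ => c * (y : ℂ)) c x := by simpa using h0.const_mul c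
  have h2 : HasDerivAt (fun y : ℝ => Complex.exp (c * y)) (c * Complex.exp (c * x)) x := by
    simpa [mul_comm] using h1.cexp
  refine (h2.mul ((h0.div_const c).sub_const (1 / c ^ 2))).congr_deriv ?_
  field_simp
  ring

lemma integral_x_exp (c : ℝ) :
    ∫ x in (-1:ℝ)..1, (x : ℂ) * Complex.exp ((c : ℂ) * Complex.I * x)
      = 2 * Complex.I * (gg c : ℂ) := by
  rcases eq_or_ne c 0 with rfl | hc
  · simp only [Complex.ofReal_zero, zero_mul, Complex.exp_zero, mul_one, gg_zero]
    rw [intervalIntegral.integral_ofReal (f := fun x : ℝ => x)]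
    simp [integral_id]
  · have hc' : (c : ℂ) * Complex.I ≠ 0 := by
      simp [hc, Complex.I_ne_zero]
    have key := intervalIntegral.integral_eq_sub_of_hasDerivAt
      (f := fun y : ℝ => Complex.exp (((c:ℂ) * Complex.I) * y) * (y / ((c:ℂ)*Complex.I) - 1 / ((c:ℂ)*Complex.I) ^ 2))
      (f' := fun y : ℝ => (y : ℂ) * Complex.exp (((c:ℂ)*Complex.I) * y))
      (a := (-1:ℝ)) (b := 1)
      (fun y _ => key_hasDerivAt hc' y) ?_
    · have E1 : Complex.exp ((c:ℂ) * Complex.I * ((1:ℝ):ℂ))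
          = (Real.cos c : ℂ) + (Real.sin c : ℂ) * Complex.I := by
        have : (c:ℂ) * Complex.I * ((1:ℝ):ℂ) = (c:ℂ) * Complex.I := by push_cast; ring
        rw [this, Complex.exp_mul_I, Complex.ofReal_cos, Complex.ofReal_sin]
      have E2 : Complex.exp ((c:ℂ) * Complex.I * ((-1:ℝ):ℂ))
          = (Real.cos c : ℂ) - (Real.sin c : ℂ) * Complex.I := by
        have : (c:ℂ) * Complex.I * ((-1:ℝ):ℂ) = ((-c : ℝ):ℂ) * Complex.I := by push_cast; ring
        rw [this, Complex.exp_mul_I, Complex.ofReal_neg, Complex.cos_neg, Complex.sin_neg,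
          Complex.ofReal_cos, Complex.ofReal_sin]
        ring
      rw [key]
      simp only [E1, E2]
      unfold gg
      have hC : (c : ℂ) ≠ 0 := by exact_mod_cast hc
      push_cast
      field_simp
      ring_nf
      simp [Complex.I_sq]
      ring
    · apply Continuous.intervalIntegrable
      continuity




noncomputable def FF (a : ℝ) : ℝ → ℂ := fun x => (x:ℂ) * Complex.exp ((↑(π * a)) * Complex.I * x)

lemma continuous_FF (a : ℝ) : Continuous (FF a) := by
  unfold FF; continuity

lemma norm_FF (a x : ℝ) : ‖FF a x‖ = |x| := by
  unfold FF
  rw [norm_mul, Complex.norm_exp]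
  have : ((↑(π * a)) * Complex.I * (x:ℂ)).re = 0 := by simp
  rw [this]
  simp [Complex.norm_real, Real.norm_eq_abs]

lemma coeff_FF (a : ℝ) (n : ℤ) :
    fourierCoeffOn (by norm_num : (-1:ℝ) < 1) (FF a) n
      = Complex.I * (gg (π * (a - n)) : ℂ) := by
  rw [fourierCoeffOn_eq_integral]
  have : (∫ x in (-1:ℝ)..1, fourier (-n) (x : AddCircle ((1:ℝ) - (-1))) • FF a x)
      = ∫ x in (-1:ℝ)..1, (x:ℂ) * Complex.exp ((↑(π * (a - n)) : ℂ) * Complex.I * x) := by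
    apply intervalIntegral.integral_congr
    intro x _
    beta_reduce
    rw [fourier_coe_apply]
    unfold FF
    rw [smul_eq_mul, ← mul_assoc, mul_comm _ ((x:ℂ)), mul_assoc, ← Complex.exp_add]
    congr 1
    push_cast
    have : ((1:ℂ) - (-1)) = 2 := by norm_num
    rw [this]
    field_simp
    ring
  rw [this, integral_x_exp]
  have : ((1:ℝ) - (-1)) = 2 := by norm_num
  rw [this]
  rw [Complex.real_smul]
  push_cast
  ring

instance fact2 : Fact ((0:ℝ) < 2) := ⟨by norm_num⟩

lemma parseval_FF (a : ℝ) : HasSum (fun n : ℤ => (gg (π * (a - n)))^2) (1/3 : ℝ) := by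
  set f : AddCircle (2:ℝ) → ℂ := AddCircle.liftIoc 2 (-1) (FF a) with hf
  have hmeasf : Measurable f := by
    have : f = (FF a) ∘ (Subtype.val) ∘ (AddCircle.measurableEquivIoc 2 (-1)) := rfl
    rw [this]
    exact ((continuous_FF a).measurable.comp measurable_subtype_coe).comp
      (AddCircle.measurableEquivIoc 2 (-1)).measurable
  have hbound : ∀ x : AddCircle (2:ℝ), ‖f x‖ ≤ 1 := by
    intro x
    rw [hf]
    have hx := ((AddCircle.equivIoc (2:ℝ) (-1)) x).2
    have : AddCircle.liftIoc 2 (-1) (FF a) x = FF a ((AddCircle.equivIoc (2:ℝ) (-1)) x) := rfl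
    rw [this, norm_FF]
    rw [abs_le]
    constructor
    · linarith [hx.1]
    · linarith [hx.2]
  have hmem : MemLp f 2 haarAddCircle := by
    refine MemLp.mono_exponent ?_ le_top
    exact memLp_top_of_bound hmeasf.aestronglyMeasurable 1 (Filter.Eventually.of_forall hbound)
  have P := tsum_sq_fourierCoeff (hmem.toLp f)
  have hco : ∀ n : ℤ, fourierCoeff ((hmem.toLp f : Lp ℂ 2 haarAddCircle) : AddCircle (2:ℝ) → ℂ) n
      = fourierCoeff f n := by
    intro n
    unfold fourierCoeff
    apply MeasureTheory.integral_congr_ae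
    filter_upwards [hmem.coeFn_toLp] with x hx
    rw [hx]
  have hcoeff : ∀ n : ℤ, fourierCoeff f n = Complex.I * (gg (π * (a - n)) : ℂ) := by
    intro n
    rw [hf, fourierCoeff_liftIoc_eq]
    rw [show fourierCoeffOn (lt_add_of_pos_right (-1:ℝ) fact2.out) (FF a) n
        = fourierCoeffOn (by norm_num : (-1:ℝ) < 1) (FF a) n from by congr 1 <;> norm_num]
    exact coeff_FF a n
  have hLHS : ∀ n : ℤ, ‖fourierCoeff ((hmem.toLp f : Lp ℂ 2 haarAddCircle) : AddCircle (2:ℝ) → ℂ) n‖^2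
      = (gg (π * (a - n)))^2 := by
    intro n
    rw [hco n, hcoeff n, norm_mul, Complex.norm_I, one_mul, Complex.norm_real,
      Real.norm_eq_abs, sq_abs]
  -- RHS : ∫ ‖toLp f‖² ∂haar = 1/3
  have hRHS : (∫ x : AddCircle (2:ℝ), ‖(hmem.toLp f : Lp ℂ 2 haarAddCircle) x‖^2 ∂haarAddCircle)
      = 1/3 := by
    have h1 : (∫ x : AddCircle (2:ℝ), ‖(hmem.toLp f : Lp ℂ 2 haarAddCircle) x‖^2 ∂haarAddCircle)
        = ∫ x : AddCircle (2:ℝ), ‖f x‖^2 ∂haarAddCircle := by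
      apply MeasureTheory.integral_congr_ae
      filter_upwards [hmem.coeFn_toLp] with x hx
      rw [hx]
    rw [h1]
    have h2 : (∫ x : AddCircle (2:ℝ), ‖f x‖^2 ∂(volume : Measure (AddCircle (2:ℝ))))
        = 2 * ∫ x : AddCircle (2:ℝ), ‖f x‖^2 ∂haarAddCircle := by
      rw [AddCircle.volume_eq_smul_haarAddCircle, MeasureTheory.integral_smul_measure]
      norm_num [ENNReal.toReal_ofReal]
    have h3 : (∫ x : AddCircle (2:ℝ), ‖f x‖^2 ∂(volume : Measure (AddCircle (2:ℝ)))) = 2/3 := by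
      rw [← AddCircle.integral_preimage 2 (-1) (fun x => ‖f x‖^2)]
      have h4 : ∀ x ∈ Ioc (-1:ℝ) (-1 + 2), ‖f (↑x)‖^2 = x^2 := by
        intro x hx
        rw [hf, AddCircle.liftIoc_coe_apply hx, norm_FF, sq_abs]
      rw [setIntegral_congr_fun measurableSet_Ioc h4]
      have : (-1:ℝ) + 2 = 1 := by norm_num
      rw [this, ← intervalIntegral.integral_of_le (by norm_num : (-1:ℝ) ≤ 1)]
      rw [integral_pow]
      norm_num
    linarith
  rw [hRHS] at P
  simp_rw [hLHS] at P
  -- summability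
  have hsum : Summable (fun n : ℤ => (gg (π * (a - n)))^2) := by
    have := (lp.memℓp (fourierBasis.repr (hmem.toLp f))).summable (by norm_num : 0 < (2:ℝ≥0∞).toReal)
    have he : ∀ n : ℤ, ‖(fourierBasis.repr (hmem.toLp f)) n‖ ^ (2:ℝ≥0∞).toReal
        = (gg (π * (a - n)))^2 := by
      intro n
      rw [fourierBasis_repr, hco n, hcoeff n]
      rw [norm_mul, Complex.norm_I, one_mul, Complex.norm_real, Real.norm_eq_abs]
      rw [ENNReal.toReal_ofNat, Real.rpow_two, sq_abs]
    exact this.congr he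
  have := hsum.hasSum
  rwa [P] at this




lemma measurable_gg : Measurable gg := by
  unfold gg
  exact (Real.measurable_sin.sub (measurable_id.mul Real.measurable_cos)).div
    (measurable_id.pow_const 2)

lemma gg_neg (t : ℝ) : gg (-t) = - gg t := by
  unfold gg
  rw [Real.sin_neg, Real.cos_neg]
  ring_nf

lemma hasSum_shift (u : ℝ) : HasSum (fun k : ℤ => (gg (u + k * π))^2) (1/3 : ℝ) := by
  have h := parseval_FF (u / π)
  have h2 := ((Equiv.neg ℤ).hasSum_iff).mpr h
  have he : ((fun n : ℤ => (gg (π * (u / π - n)))^2) ∘ (Equiv.neg ℤ))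
      = fun k : ℤ => (gg (u + k * π))^2 := by
    funext k
    simp only [Function.comp_apply, Equiv.neg_apply]
    congr 2
    push_cast
    have hπ : π ≠ 0 := Real.pi_ne_zero
    field_simp
    ring
  rwa [he] at h2

noncomputable def Q : ℝ → ℝ≥0∞ := fun t => ENNReal.ofReal (gg t ^ 2)

lemma cover_univ : (⋃ k : ℤ, Ico ((k:ℝ) * π) ((k+1 : ℤ) * π)) = univ := by
  ext x
  simp only [mem_iUnion, mem_Ico, mem_univ, iff_true]
  refine ⟨⌊x / π⌋, ?_, ?_⟩
  · have h1 : (⌊x / π⌋ : ℝ) * π ≤ (x / π) * π :=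
      mul_le_mul_of_nonneg_right (Int.floor_le _) Real.pi_pos.le
    rwa [div_mul_cancel₀ x Real.pi_ne_zero] at h1
  · push_cast
    have h1 : (x / π) * π < ((⌊x / π⌋ : ℝ) + 1) * π :=
      mul_lt_mul_of_pos_right (Int.lt_floor_add_one _) Real.pi_pos
    rwa [div_mul_cancel₀ x Real.pi_ne_zero] at h1

lemma disj : Pairwise (Function.onFun Disjoint (fun k : ℤ => Ico ((k:ℝ) * π) ((k+1 : ℤ) * π))) := by
  intro k l hkl
  apply Set.Ico_disjoint_Ico.mpr
  rcases lt_or_gt_of_ne hkl with h | h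
  · apply min_le_of_left_le
    apply le_max_of_le_right
    push_cast
    have : (k:ℝ) + 1 ≤ l := by exact_mod_cast h
    nlinarith [Real.pi_pos]
  · apply min_le_of_right_le
    apply le_max_of_le_left
    push_cast
    have : (l:ℝ) + 1 ≤ k := by exact_mod_cast h
    nlinarith [Real.pi_pos]

lemma lint_total : ∫⁻ t, Q t = ENNReal.ofReal (π / 3) := by
  have hQm : Measurable Q := (measurable_gg.pow_const 2).ennreal_ofReal
  rw [← setLIntegral_univ, ← cover_univ,
    lintegral_iUnion (fun k => measurableSet_Ico) disj]
  have step : ∀ k : ℤ, ∫⁻ t in Ico ((k:ℝ) * π) ((k+1 : ℤ) * π), Q t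
      = ∫⁻ u in Ico (0:ℝ) π, Q (u + k * π) := by
    intro k
    have hemb := (MeasurableEquiv.addRight ((k:ℝ) * π)).measurableEmbedding
    have hmp := measurePreserving_add_right (volume : Measure ℝ) ((k:ℝ) * π)
    have := hmp.setLIntegral_comp_preimage_emb hemb Q (Ico ((k:ℝ) * π) ((k+1 : ℤ) * π))
    have hpre : (fun a : ℝ => a + (k:ℝ) * π) ⁻¹' (Ico ((k:ℝ) * π) ((k+1 : ℤ) * π))
        = Ico (0:ℝ) π := by
      ext y
      simp only [mem_preimage, mem_Ico]
      push_cast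
      constructor
      · rintro ⟨h1, h2⟩; constructor <;> linarith
      · rintro ⟨h1, h2⟩; constructor <;> [linarith; nlinarith]
    rw [hpre] at this
    exact this.symm
  simp_rw [step]
  rw [← lintegral_tsum (f := fun (k : ℤ) (u : ℝ) => Q (u + k * π))
    (fun k => (hQm.comp (measurable_id.add_const _)).aemeasurable)]
  have hpt : ∀ u : ℝ, (∑' k : ℤ, Q (u + k * π)) = ENNReal.ofReal (1/3 : ℝ) := by
    intro u
    have hs := hasSum_shift u
    rw [← hs.tsum_eq]
    rw [ENNReal.ofReal_tsum_of_nonneg (fun k => sq_nonneg _) hs.summable]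
    rfl
  simp_rw [hpt]
  rw [setLIntegral_const]
  rw [Real.volume_Ico]
  rw [← ENNReal.ofReal_mul (by norm_num)]
  congr 1
  ring

lemma lint_reflect : ∫⁻ t in Iio (0:ℝ), Q t = ∫⁻ t in Ioi (0:ℝ), Q t := by
  have hmp := Measure.measurePreserving_neg (volume : Measure ℝ)
  have hemb : MeasurableEmbedding (fun t : ℝ => -t) := measurableEmbedding_neg
  have := hmp.setLIntegral_comp_preimage_emb hemb Q (Iio (0:ℝ))
  have hpre : (fun t : ℝ => -t) ⁻¹' (Iio (0:ℝ)) = Ioi 0 := by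
    ext y; simp [neg_lt, mem_Ioi]
  rw [hpre] at this
  rw [← this]
  apply lintegral_congr
  intro t
  unfold Q
  rw [← neg_neg t, gg_neg, neg_neg]
  ring_nf

lemma lint_Ioi : ∫⁻ t in Ioi (0:ℝ), Q t = ENNReal.ofReal (π / 6) := by
  have hQm : Measurable Q := (measurable_gg.pow_const 2).ennreal_ofReal
  have hsplit : ∫⁻ t, Q t = ∫⁻ t in Iio (0:ℝ) ∪ Ioi 0, Q t := by
    rw [← setLIntegral_univ (μ := volume) Q]
    apply (setLIntegral_congr _).symm
    rw [ae_eq_univ, Set.compl_union]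
    have : (Iio (0:ℝ))ᶜ ∩ (Ioi 0)ᶜ = {0} := by
      ext x
      simp only [compl_Iio, compl_Ioi, mem_inter_iff, mem_Ici, mem_Iic, mem_singleton_iff]
      constructor
      · rintro ⟨h1, h2⟩; linarith
      · rintro rfl; exact ⟨le_rfl, le_rfl⟩
    rw [this]
    exact measure_singleton 0
  have hunion : ∫⁻ t in Iio (0:ℝ) ∪ Ioi 0, Q t
      = (∫⁻ t in Iio (0:ℝ), Q t) + ∫⁻ t in Ioi (0:ℝ), Q t := by
    apply lintegral_union measurableSet_Ioi
    exact Set.disjoint_left.mpr (fun x hx hx2 => by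
      simp only [mem_Iio] at hx; simp only [mem_Ioi] at hx2; linarith)
  have h2 : (2:ℝ≥0∞) * ∫⁻ t in Ioi (0:ℝ), Q t = ENNReal.ofReal (π / 3) := by
    rw [two_mul]
    nth_rewrite 1 [← lint_reflect]
    rw [← hunion, ← hsplit, lint_total]
  have hne : (∫⁻ t in Ioi (0:ℝ), Q t) ≠ ⊤ := by
    intro hc
    rw [hc] at h2
    simp at h2
  calc ∫⁻ t in Ioi (0:ℝ), Q t = (2:ℝ≥0∞)⁻¹ * ((2:ℝ≥0∞) * ∫⁻ t in Ioi (0:ℝ), Q t) := by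
        rw [← mul_assoc, ENNReal.inv_mul_cancel (by norm_num) (by norm_num), one_mul]
    _ = (2:ℝ≥0∞)⁻¹ * ENNReal.ofReal (π / 3) := by rw [h2]
    _ = ENNReal.ofReal (π / 6) := by
        rw [← ENNReal.ofReal_ofNat, ← ENNReal.ofReal_inv_of_pos (by norm_num),
          ← ENNReal.ofReal_mul (by norm_num)]
        norm_num
        rw [← ENNReal.ofReal_mul (by norm_num)]
        congr 1
        ring

/-- With `h t = 3(sin t − t cos t)/t³`, one has `∫₀^∞ h(t)² t² dt = 3π/2`. -/
theorem integral_h_sq_mul_sq (h : ℝ → ℝ)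
    (hh : ∀ t : ℝ, t ≠ 0 → h t = 3 * (Real.sin t - t * Real.cos t) / t ^ 3) :
    ∫ t in Set.Ioi (0 : ℝ), (h t) ^ 2 * t ^ 2 = 3 * π / 2 := by
  have hcongr : ∫ t in Set.Ioi (0 : ℝ), (h t) ^ 2 * t ^ 2
      = ∫ t in Set.Ioi (0 : ℝ), 9 * gg t ^ 2 := by
    apply setIntegral_congr_fun measurableSet_Ioi
    intro t ht
    have htne : t ≠ 0 := ne_of_gt ht
    show h t ^ 2 * t ^ 2 = 9 * gg t ^ 2
    rw [hh t htne]
    unfold gg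
    field_simp
    ring
  rw [hcongr]
  have hnn : 0 ≤ᵐ[volume.restrict (Ioi (0:ℝ))] fun t => 9 * gg t ^ 2 :=
    Filter.Eventually.of_forall (fun t => by positivity)
  have hms : AEStronglyMeasurable (fun t => 9 * gg t ^ 2)
      (volume.restrict (Ioi (0:ℝ))) :=
    ((measurable_gg.pow_const 2).const_mul 9).aestronglyMeasurable
  rw [integral_eq_lintegral_of_nonneg_ae hnn hms]
  have : ∀ t : ℝ, ENNReal.ofReal (9 * gg t ^ 2) = ENNReal.ofReal 9 * Q t := by
    intro t
    rw [ENNReal.ofReal_mul (by norm_num : (0:ℝ) ≤ 9)]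
    rfl
  simp_rw [this]
  rw [lintegral_const_mul (ENNReal.ofReal 9) (μ := volume.restrict (Ioi 0)) (f := Q)
    ((measurable_gg.pow_const 2).ennreal_ofReal), lint_Ioi]
  rw [← ENNReal.ofReal_mul (by norm_num)]
  rw [ENNReal.toReal_ofReal (by positivity)]
  ring
end

section
/- Define h : ℝ → ℝ by h(t) = 3(sin t − t cos t)/t³ for t ≠ 0. Then for every a > 0, ∫₀^∞ h(t) h(at) t² dt = 3π / (2 max(a,1)³). -/
open MeasureTheory Real

open Set Filter Topology

namespace HProof
lemma int_pow_exp (k : ℕ) {s : ℝ} (hs : 0 < s) :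
    IntegrableOn (fun t : ℝ => t ^ k * Real.exp (-(s * t))) (Set.Ioi 0) := by
  have := integrableOn_rpow_mul_exp_neg_mul_rpow (p := 1) (s := (k : ℝ)) (b := s)
    (lt_of_lt_of_le (by norm_num) (Nat.cast_nonneg k)) one_pos hs
  refine this.congr_fun (fun x hx => ?_) measurableSet_Ioi
  beta_reduce
  rw [Real.rpow_natCast, Real.rpow_one]
  ring_nf

lemma tendsto_pow_exp (k : ℕ) {s : ℝ} (hs : 0 < s) :
    Tendsto (fun t : ℝ => t ^ k * Real.exp (-(s * t))) atTop (𝓝 0) := by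
  have h1 : Tendsto (fun t : ℝ => s * t) atTop atTop :=
    Tendsto.const_mul_atTop hs tendsto_id
  have h2 := (tendsto_pow_mul_exp_neg_atTop_nhds_zero k).comp h1
  have h3 : Tendsto (fun t : ℝ => ((s * t) ^ k * Real.exp (-(s * t))) * (s ^ k)⁻¹)
      atTop (𝓝 (0 * (s ^ k)⁻¹)) := h2.mul_const _
  rw [zero_mul] at h3
  refine h3.congr' ?_
  filter_upwards [eventually_gt_atTop 0] with t ht
  field_simp
  ring

lemma abs_u_le_sq (x : ℝ) (hx : 0 ≤ x) : |Real.sin x - x * Real.cos x| ≤ x ^ 2 := by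
  have key : Real.sin x - x * Real.cos x = ∫ s in (0:ℝ)..x, s * Real.sin s := by
    rw [intervalIntegral.integral_eq_sub_of_hasDerivAt (f := fun y => Real.sin y - y * Real.cos y)]
    · simp
    · intro y _
      have h1 : HasDerivAt (fun y : ℝ => Real.sin y - y * Real.cos y)
          (Real.cos y - (1 * Real.cos y + y * -Real.sin y)) y :=
        (Real.hasDerivAt_sin y).sub ((hasDerivAt_id y).mul (Real.hasDerivAt_cos y))
      exact h1.congr_deriv (by ring)
    · exact (continuous_id.mul Real.continuous_sin).intervalIntegrable _ _
  rw [key]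
  have := intervalIntegral.norm_integral_le_of_norm_le_const (C := x)
    (f := fun s => s * Real.sin s) (a := (0:ℝ)) (b := x) ?_
  · rw [Real.norm_eq_abs] at this
    calc |∫ s in (0:ℝ)..x, s * Real.sin s| ≤ x * |x - 0| := this
    _ = x ^ 2 := by rw [sub_zero, abs_of_nonneg hx]; ring
  · intro y hy
    rw [Set.uIoc_of_le hx] at hy
    rw [Real.norm_eq_abs, abs_mul]
    calc |y| * |Real.sin y| ≤ |y| * 1 :=
          mul_le_mul_of_nonneg_left (Real.abs_sin_le_one _) (abs_nonneg _)
    _ = |y| := mul_one _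
    _ ≤ x := by rw [abs_of_pos hy.1]; exact hy.2

lemma abs_u_le_lin (x : ℝ) : |Real.sin x - x * Real.cos x| ≤ 1 + |x| := by
  calc |Real.sin x - x * Real.cos x| ≤ |Real.sin x| + |x * Real.cos x| := abs_sub _ _
  _ ≤ 1 + |x| := by
      have h1 : |x * Real.cos x| ≤ |x| := by
        rw [abs_mul]
        calc |x| * |Real.cos x| ≤ |x| * 1 :=
          mul_le_mul_of_nonneg_left (Real.abs_cos_le_one _) (abs_nonneg _)
        _ = |x| := mul_one _
      have h2 := Real.abs_sin_le_one x
      linarith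


-- derivative helpers
lemma hd_exp (s t : ℝ) : HasDerivAt (fun t : ℝ => Real.exp (-(s * t)))
    (Real.exp (-(s * t)) * (-s)) t := by
  have h : HasDerivAt (fun t : ℝ => -(s * t)) (-s) t := by
    simpa using ((hasDerivAt_id t).const_mul (-s))
  simpa using h.exp

lemma hd_lin (b t : ℝ) : HasDerivAt (fun t : ℝ => b * t) b t := by
  simpa using (hasDerivAt_id t).const_mul b

lemma hd_poly (c₀ c₁ c₂ t : ℝ) :
    HasDerivAt (fun t : ℝ => c₂ * t ^ 2 + c₁ * t + c₀) (c₂ * (2 * t) + c₁) t := by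
  have h1 : HasDerivAt (fun t : ℝ => t ^ 2) (2 * t) t := by simpa using hasDerivAt_pow 2 t
  simpa using ((h1.const_mul c₂).add ((hasDerivAt_id t).const_mul c₁)).add_const c₀

/-- master derivative: F t = exp(-(s t)) (A(t) cos bt + B(t) sin bt) -/
lemma hd_master (s b a₀ a₁ a₂ c₀ c₁ c₂ : ℝ) (t : ℝ) :
    HasDerivAt (fun t : ℝ => Real.exp (-(s * t)) *
      ((a₂ * t ^ 2 + a₁ * t + a₀) * Real.cos (b * t) +
       (c₂ * t ^ 2 + c₁ * t + c₀) * Real.sin (b * t)))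
      (Real.exp (-(s * t)) * (-s) *
        ((a₂ * t ^ 2 + a₁ * t + a₀) * Real.cos (b * t) +
         (c₂ * t ^ 2 + c₁ * t + c₀) * Real.sin (b * t)) +
       Real.exp (-(s * t)) *
        (((a₂ * (2 * t) + a₁) * Real.cos (b * t) +
          (a₂ * t ^ 2 + a₁ * t + a₀) * (-Real.sin (b * t) * b)) +
         ((c₂ * (2 * t) + c₁) * Real.sin (b * t) +
          (c₂ * t ^ 2 + c₁ * t + c₀) * (Real.cos (b * t) * b)))) t := by
  have hcos : HasDerivAt (fun t : ℝ => Real.cos (b * t)) (-Real.sin (b * t) * b) t :=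
    (hd_lin b t).cos
  have hsin : HasDerivAt (fun t : ℝ => Real.sin (b * t)) (Real.cos (b * t) * b) t :=
    (hd_lin b t).sin
  exact (hd_exp s t).mul
    (((hd_poly a₀ a₁ a₂ t).mul hcos).add ((hd_poly c₀ c₁ c₂ t).mul hsin))

lemma int_exp_trig {s : ℝ} (hs : 0 < s) (b : ℝ) (k : ℕ) (g : ℝ → ℝ)
    (hg : Continuous g) (hgb : ∀ x, |g x| ≤ 1) :
    IntegrableOn (fun t : ℝ => Real.exp (-(s * t)) * (t ^ k * g (b * t))) (Set.Ioi 0) := by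
  refine Integrable.mono (int_pow_exp k hs) ?_ ?_
  · exact (((Real.continuous_exp.comp (continuous_const.mul continuous_id).neg).mul
      ((continuous_pow k).mul (hg.comp (continuous_const.mul continuous_id))))).aestronglyMeasurable.restrict
  · filter_upwards [ae_restrict_mem measurableSet_Ioi] with t ht
    have ht0 : (0:ℝ) < t := ht
    rw [Real.norm_eq_abs, Real.norm_eq_abs, abs_mul, abs_mul, abs_mul]
    rw [abs_of_pos (Real.exp_pos _), abs_of_pos (pow_pos ht0 k)]
    calc Real.exp (-(s*t)) * (t ^ k * |g (b*t)|) ≤ Real.exp (-(s*t)) * (t ^ k * 1) := by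
          gcongr
          exact hgb _
    _ = t ^ k * Real.exp (-(s*t)) := by ring

end HProof

namespace HProof2
open HProof

lemma tendsto_master {s : ℝ} (hs : 0 < s) (b a₀ a₁ a₂ c₀ c₁ c₂ : ℝ) :
    Tendsto (fun t : ℝ => Real.exp (-(s * t)) *
      ((a₂ * t ^ 2 + a₁ * t + a₀) * Real.cos (b * t) +
       (c₂ * t ^ 2 + c₁ * t + c₀) * Real.sin (b * t))) atTop (𝓝 0) := by
  have hG : Tendsto (fun t : ℝ => (|a₀| + |c₀|) * (t ^ 0 * Real.exp (-(s * t)))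
      + (|a₁| + |c₁|) * (t ^ 1 * Real.exp (-(s * t)))
      + (|a₂| + |c₂|) * (t ^ 2 * Real.exp (-(s * t)))) atTop (𝓝 0) := by
    have := (((tendsto_pow_exp 0 hs).const_mul (|a₀| + |c₀|)).add
      ((tendsto_pow_exp 1 hs).const_mul (|a₁| + |c₁|))).add
      ((tendsto_pow_exp 2 hs).const_mul (|a₂| + |c₂|))
    simpa using this
  refine squeeze_zero_norm' ?_ hG
  filter_upwards [eventually_ge_atTop 0] with t ht
  have he : (0:ℝ) ≤ Real.exp (-(s * t)) := (Real.exp_pos _).le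
  have hA : |(a₂ * t ^ 2 + a₁ * t + a₀) * Real.cos (b * t)|
      ≤ |a₂| * t ^ 2 + |a₁| * t + |a₀| := by
    rw [abs_mul]
    calc |a₂ * t ^ 2 + a₁ * t + a₀| * |Real.cos (b * t)|
        ≤ |a₂ * t ^ 2 + a₁ * t + a₀| * 1 :=
          mul_le_mul_of_nonneg_left (Real.abs_cos_le_one _) (abs_nonneg _)
      _ = |a₂ * t ^ 2 + a₁ * t + a₀| := mul_one _
      _ ≤ |a₂ * t ^ 2| + |a₁ * t| + |a₀| := abs_add_three _ _ _
      _ = |a₂| * t ^ 2 + |a₁| * t + |a₀| := by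
          rw [abs_mul, abs_mul, abs_of_nonneg (sq_nonneg t), abs_of_nonneg ht]
  have hB : |(c₂ * t ^ 2 + c₁ * t + c₀) * Real.sin (b * t)|
      ≤ |c₂| * t ^ 2 + |c₁| * t + |c₀| := by
    rw [abs_mul]
    calc |c₂ * t ^ 2 + c₁ * t + c₀| * |Real.sin (b * t)|
        ≤ |c₂ * t ^ 2 + c₁ * t + c₀| * 1 :=
          mul_le_mul_of_nonneg_left (Real.abs_sin_le_one _) (abs_nonneg _)
      _ = |c₂ * t ^ 2 + c₁ * t + c₀| := mul_one _
      _ ≤ |c₂ * t ^ 2| + |c₁ * t| + |c₀| := abs_add_three _ _ _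
      _ = |c₂| * t ^ 2 + |c₁| * t + |c₀| := by
          rw [abs_mul, abs_mul, abs_of_nonneg (sq_nonneg t), abs_of_nonneg ht]
  rw [Real.norm_eq_abs, abs_mul, abs_of_nonneg he]
  calc Real.exp (-(s * t)) * |(a₂ * t ^ 2 + a₁ * t + a₀) * Real.cos (b * t) +
        (c₂ * t ^ 2 + c₁ * t + c₀) * Real.sin (b * t)|
      ≤ Real.exp (-(s * t)) * ((|a₂| * t ^ 2 + |a₁| * t + |a₀|)
        + (|c₂| * t ^ 2 + |c₁| * t + |c₀|)) := by
        refine mul_le_mul_of_nonneg_left ?_ he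
        exact (abs_add_le _ _).trans (add_le_add hA hB)
    _ = (|a₀| + |c₀|) * (t ^ 0 * Real.exp (-(s * t)))
        + (|a₁| + |c₁|) * (t ^ 1 * Real.exp (-(s * t)))
        + (|a₂| + |c₂|) * (t ^ 2 * Real.exp (-(s * t))) := by ring

end HProof2

namespace HProof3
open HProof HProof2

lemma lap0 {s : ℝ} (hs : 0 < s) (b : ℝ) :
    ∫ t in Ioi (0:ℝ), Real.exp (-(s*t)) * Real.cos (b*t) = s / (s^2+b^2) := by
  have hm : (0:ℝ) < s^2+b^2 := by positivity
  have hint : IntegrableOn (fun t : ℝ => Real.exp (-(s*t)) * Real.cos (b*t)) (Ioi 0) := by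
    have := int_exp_trig hs b 0 Real.cos Real.continuous_cos Real.abs_cos_le_one
    simpa using this
  have key := integral_Ioi_of_hasDerivAt_of_tendsto' (a := 0)
    (f := fun t : ℝ => Real.exp (-(s*t)) * ((0*t^2+0*t+(-s/(s^2+b^2))) * Real.cos (b*t)
      + (0*t^2+0*t+(b/(s^2+b^2))) * Real.sin (b*t)))
    (f' := fun t : ℝ => Real.exp (-(s*t)) * Real.cos (b*t))
    (fun t _ => by
      exact (hd_master s b (-s/(s^2+b^2)) 0 0 (b/(s^2+b^2)) 0 0 t).congr_deriv (by
        field_simp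
        ring)) hint (tendsto_master hs b _ _ _ _ _ _)
  rw [key]
  norm_num
  ring

lemma lap1 {s : ℝ} (hs : 0 < s) (b : ℝ) :
    ∫ t in Ioi (0:ℝ), Real.exp (-(s*t)) * (t * Real.sin (b*t))
      = 2*b*s / (s^2+b^2)^2 := by
  have hm : (0:ℝ) < s^2+b^2 := by positivity
  have hint : IntegrableOn (fun t : ℝ => Real.exp (-(s*t)) * (t * Real.sin (b*t))) (Ioi 0) := by
    have := int_exp_trig hs b 1 Real.sin Real.continuous_sin Real.abs_sin_le_one
    simpa using this
  have key := integral_Ioi_of_hasDerivAt_of_tendsto' (a := 0)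
    (f := fun t : ℝ => Real.exp (-(s*t)) * ((0*t^2+(-b/(s^2+b^2))*t+(-(2*s*b)/(s^2+b^2)^2)) * Real.cos (b*t)
      + (0*t^2+(-s/(s^2+b^2))*t+((b^2-s^2)/(s^2+b^2)^2)) * Real.sin (b*t)))
    (f' := fun t : ℝ => Real.exp (-(s*t)) * (t * Real.sin (b*t)))
    (fun t _ => by
      exact (hd_master s b (-(2*s*b)/(s^2+b^2)^2) (-b/(s^2+b^2)) 0 ((b^2-s^2)/(s^2+b^2)^2) (-s/(s^2+b^2)) 0 t).congr_deriv (by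
        field_simp
        ring)) hint (tendsto_master hs b _ _ _ _ _ _)
  rw [key]
  norm_num
  ring

lemma lap2 {s : ℝ} (hs : 0 < s) (b : ℝ) :
    ∫ t in Ioi (0:ℝ), Real.exp (-(s*t)) * (t^2 * Real.cos (b*t))
      = 2*s*(s^2-3*b^2) / (s^2+b^2)^3 := by
  have hm : (0:ℝ) < s^2+b^2 := by positivity
  have hint : IntegrableOn (fun t : ℝ => Real.exp (-(s*t)) * (t^2 * Real.cos (b*t))) (Ioi 0) := by
    have := int_exp_trig hs b 2 Real.cos Real.continuous_cos Real.abs_cos_le_one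
    simpa using this
  have key := integral_Ioi_of_hasDerivAt_of_tendsto' (a := 0)
    (f := fun t : ℝ => Real.exp (-(s*t)) * (((-s/(s^2+b^2))*t^2+(2*(b^2-s^2)/(s^2+b^2)^2)*t+(2*s*(3*b^2-s^2)/(s^2+b^2)^3)) * Real.cos (b*t)
      + ((b/(s^2+b^2))*t^2+(4*s*b/(s^2+b^2)^2)*t+(2*b*(3*s^2-b^2)/(s^2+b^2)^3)) * Real.sin (b*t)))
    (f' := fun t : ℝ => Real.exp (-(s*t)) * (t^2 * Real.cos (b*t)))
    (fun t _ => by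
      exact (hd_master s b (2*s*(3*b^2-s^2)/(s^2+b^2)^3) (2*(b^2-s^2)/(s^2+b^2)^2) (-s/(s^2+b^2)) (2*b*(3*s^2-b^2)/(s^2+b^2)^3) (4*s*b/(s^2+b^2)^2) (b/(s^2+b^2)) t).congr_deriv (by
        field_simp
        ring)) hint (tendsto_master hs b _ _ _ _ _ _)
  rw [key]
  norm_num
  field_simp
  ring

end HProof3

namespace HProof4
open HProof HProof2 HProof3

lemma uv_decomp (a t : ℝ) :
    (Real.sin t - t * Real.cos t) * (Real.sin (a*t) - a*t * Real.cos (a*t)) =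
      (1/2) * Real.cos ((1-a)*t) + ((1-a)/2) * (t * Real.sin ((1-a)*t))
      + (a/2) * (t^2 * Real.cos ((1-a)*t))
      + (-(1/2)) * Real.cos ((1+a)*t) + (-((1+a)/2)) * (t * Real.sin ((1+a)*t))
      + (a/2) * (t^2 * Real.cos ((1+a)*t)) := by
  rw [show (1-a)*t = t - a*t by ring, show (1+a)*t = t + a*t by ring,
      Real.cos_sub, Real.cos_add, Real.sin_sub, Real.sin_add]
  ring

lemma Linner {s : ℝ} (hs : 0 < s) (a : ℝ) :
    ∫ t in Ioi (0:ℝ), Real.exp (-(s*t)) *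
        ((Real.sin t - t * Real.cos t) * (Real.sin (a*t) - a*t * Real.cos (a*t)))
      = (1/2) * (s/(s^2+(1-a)^2)) + ((1-a)/2) * (2*(1-a)*s/(s^2+(1-a)^2)^2)
        + (a/2) * (2*s*(s^2-3*(1-a)^2)/(s^2+(1-a)^2)^3)
        + (-(1/2)) * (s/(s^2+(1+a)^2)) + (-((1+a)/2)) * (2*(1+a)*s/(s^2+(1+a)^2)^2)
        + (a/2) * (2*s*(s^2-3*(1+a)^2)/(s^2+(1+a)^2)^3) := by
  have i1 : IntegrableOn (fun t : ℝ => Real.exp (-(s*t)) * Real.cos ((1-a)*t)) (Ioi 0) := by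
    simpa using int_exp_trig hs (1-a) 0 Real.cos Real.continuous_cos Real.abs_cos_le_one
  have i2 : IntegrableOn (fun t : ℝ => Real.exp (-(s*t)) * (t * Real.sin ((1-a)*t))) (Ioi 0) := by
    simpa using int_exp_trig hs (1-a) 1 Real.sin Real.continuous_sin Real.abs_sin_le_one
  have i3 : IntegrableOn (fun t : ℝ => Real.exp (-(s*t)) * (t^2 * Real.cos ((1-a)*t))) (Ioi 0) :=
    int_exp_trig hs (1-a) 2 Real.cos Real.continuous_cos Real.abs_cos_le_one
  have i4 : IntegrableOn (fun t : ℝ => Real.exp (-(s*t)) * Real.cos ((1+a)*t)) (Ioi 0) := by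
    simpa using int_exp_trig hs (1+a) 0 Real.cos Real.continuous_cos Real.abs_cos_le_one
  have i5 : IntegrableOn (fun t : ℝ => Real.exp (-(s*t)) * (t * Real.sin ((1+a)*t))) (Ioi 0) := by
    simpa using int_exp_trig hs (1+a) 1 Real.sin Real.continuous_sin Real.abs_sin_le_one
  have i6 : IntegrableOn (fun t : ℝ => Real.exp (-(s*t)) * (t^2 * Real.cos ((1+a)*t))) (Ioi 0) :=
    int_exp_trig hs (1+a) 2 Real.cos Real.continuous_cos Real.abs_cos_le_one
  have j1 := i1.const_mul (1/2 : ℝ)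
  have j2 := i2.const_mul ((1-a)/2 : ℝ)
  have j3 := i3.const_mul (a/2 : ℝ)
  have j4 := i4.const_mul (-(1/2) : ℝ)
  have j5 := i5.const_mul (-((1+a)/2) : ℝ)
  have j6 := i6.const_mul (a/2 : ℝ)
  have heq : EqOn
      (fun t : ℝ => Real.exp (-(s*t)) *
        ((Real.sin t - t * Real.cos t) * (Real.sin (a*t) - a*t * Real.cos (a*t))))
      (fun t : ℝ =>
        (1/2) * (Real.exp (-(s*t)) * Real.cos ((1-a)*t))
        + ((1-a)/2) * (Real.exp (-(s*t)) * (t * Real.sin ((1-a)*t)))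
        + (a/2) * (Real.exp (-(s*t)) * (t^2 * Real.cos ((1-a)*t)))
        + (-(1/2)) * (Real.exp (-(s*t)) * Real.cos ((1+a)*t))
        + (-((1+a)/2)) * (Real.exp (-(s*t)) * (t * Real.sin ((1+a)*t)))
        + (a/2) * (Real.exp (-(s*t)) * (t^2 * Real.cos ((1+a)*t)))) (Ioi 0) := by
    intro t _
    simp only
    rw [uv_decomp a t]
    ring
  have k2 : Integrable (fun t : ℝ =>
      (1/2) * (Real.exp (-(s*t)) * Real.cos ((1-a)*t))
      + ((1-a)/2) * (Real.exp (-(s*t)) * (t * Real.sin ((1-a)*t))))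
      (volume.restrict (Ioi 0)) := j1.add j2
  have k3 : Integrable (fun t : ℝ =>
      (1/2) * (Real.exp (-(s*t)) * Real.cos ((1-a)*t))
      + ((1-a)/2) * (Real.exp (-(s*t)) * (t * Real.sin ((1-a)*t)))
      + (a/2) * (Real.exp (-(s*t)) * (t^2 * Real.cos ((1-a)*t))))
      (volume.restrict (Ioi 0)) := k2.add j3
  have k4 : Integrable (fun t : ℝ =>
      (1/2) * (Real.exp (-(s*t)) * Real.cos ((1-a)*t))
      + ((1-a)/2) * (Real.exp (-(s*t)) * (t * Real.sin ((1-a)*t)))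
      + (a/2) * (Real.exp (-(s*t)) * (t^2 * Real.cos ((1-a)*t)))
      + (-(1/2)) * (Real.exp (-(s*t)) * Real.cos ((1+a)*t)))
      (volume.restrict (Ioi 0)) := k3.add j4
  have k5 : Integrable (fun t : ℝ =>
      (1/2) * (Real.exp (-(s*t)) * Real.cos ((1-a)*t))
      + ((1-a)/2) * (Real.exp (-(s*t)) * (t * Real.sin ((1-a)*t)))
      + (a/2) * (Real.exp (-(s*t)) * (t^2 * Real.cos ((1-a)*t)))
      + (-(1/2)) * (Real.exp (-(s*t)) * Real.cos ((1+a)*t))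
      + (-((1+a)/2)) * (Real.exp (-(s*t)) * (t * Real.sin ((1+a)*t))))
      (volume.restrict (Ioi 0)) := k4.add j5
  rw [setIntegral_congr_fun measurableSet_Ioi heq]
  rw [integral_add k5 j6, integral_add k4 j5, integral_add k3 j4,
      integral_add k2 j3, integral_add j1 j2]
  rw [integral_const_mul, integral_const_mul, integral_const_mul, integral_const_mul,
      integral_const_mul, integral_const_mul]
  rw [lap0 hs (1-a), lap1 hs (1-a), lap2 hs (1-a), lap0 hs (1+a), lap1 hs (1+a), lap2 hs (1+a)]

end HProof4

namespace HProof5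
open HProof

noncomputable def pat (b c s : ℝ) : ℝ :=
  (-3*b^4 - 12*c*b^2)/(s^2+b^2) + (2*b^6 + 18*c*b^4)/(s^2+b^2)^2 - 8*c*b^6/(s^2+b^2)^3

lemma pat_neg (b c s : ℝ) : pat (-b) c s = pat b c s := by
  simp only [pat]
  rw [show ((-b)^2 : ℝ) = b^2 by ring, show ((-b)^4 : ℝ) = b^4 by ring,
      show ((-b)^6 : ℝ) = b^6 by ring]

lemma hd_arctan {b : ℝ} (hb : b ≠ 0) (s : ℝ) :
    HasDerivAt (fun s : ℝ => Real.arctan (s / b)) (b / (s^2+b^2)) s := by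
  have h := (Real.hasDerivAt_arctan (s / b)).comp s ((hasDerivAt_id s).div_const b)
  exact h.congr_deriv (by
    field_simp
    ring)

lemma int_base {b : ℝ} (hb : 0 < b) :
    IntegrableOn (fun s : ℝ => (s^2+b^2)⁻¹) (Set.Ioi 0) := by
  have hderiv : ∀ x ∈ Ici (0:ℝ), HasDerivAt (fun s : ℝ => Real.arctan (s / b) / b)
      ((x^2+b^2)⁻¹) x := by
    intro x _
    have := (hd_arctan hb.ne' x).div_const b
    exact this.congr_deriv (by
      field_simp)
  have htend : Tendsto (fun s : ℝ => Real.arctan (s / b) / b) atTop (𝓝 (π/2/b)) := by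
    apply Tendsto.div_const
    have h1 : Tendsto (fun s : ℝ => s / b) atTop atTop := tendsto_id.atTop_div_const hb
    exact (Real.tendsto_arctan_atTop.mono_right nhdsWithin_le_nhds).comp h1
  exact integrableOn_Ioi_deriv_of_nonneg' hderiv
    (fun x _ => by positivity) htend

lemma cont_pat (b c : ℝ) (hb : 0 < b) : Continuous (pat b c) := by
  have hm : ∀ s : ℝ, (0:ℝ) < s^2+b^2 := fun s => by positivity
  have hc1 : Continuous fun s : ℝ => s^2+b^2 := by continuity
  unfold pat
  exact ((continuous_const.div hc1 (fun s => (hm s).ne')).add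
    (continuous_const.div (hc1.pow 2) (fun s => (pow_pos (hm s) 2).ne'))).sub
    (continuous_const.div (hc1.pow 3) (fun s => (pow_pos (hm s) 3).ne'))

lemma int_powbase {b : ℝ} (hb : 0 < b) (k : ℕ) :
    IntegrableOn (fun s : ℝ => (((s^2+b^2)^(k+1))⁻¹)) (Set.Ioi 0) := by
  have hm : ∀ s : ℝ, (0:ℝ) < s^2+b^2 := fun s => by positivity
  refine Integrable.mono ((int_base hb).const_mul (((b^2)^k)⁻¹)) ?_ ?_
  · have hc1 : Continuous fun s : ℝ => s^2+b^2 := by continuity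
    exact ((hc1.pow (k+1)).inv₀ (fun s => (pow_pos (hm s) (k+1)).ne')).aestronglyMeasurable.restrict
  · filter_upwards with s
    rw [Real.norm_eq_abs, Real.norm_eq_abs,
        abs_of_pos (inv_pos.mpr (pow_pos (hm s) (k+1)))]
    have key : ((s^2+b^2)^(k+1))⁻¹ ≤ ((b^2)^k)⁻¹ * (s^2+b^2)⁻¹ := by
      rw [← mul_inv]
      apply inv_anti₀
      · positivity
      · rw [pow_succ]
        exact mul_le_mul_of_nonneg_right
          (pow_le_pow_left₀ (by positivity) (by nlinarith [sq_nonneg s]) k) (hm s).le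
    calc ((s^2+b^2)^(k+1))⁻¹ ≤ ((b^2)^k)⁻¹ * (s^2+b^2)⁻¹ := key
    _ ≤ |((b^2)^k)⁻¹ * (s^2+b^2)⁻¹| := le_abs_self _

lemma int_pat {b : ℝ} (hb : 0 < b) (c : ℝ) : IntegrableOn (pat b c) (Set.Ioi 0) := by
  have h1 := (by simpa using int_powbase hb 0 :
    IntegrableOn (fun s : ℝ => ((s^2+b^2))⁻¹) (Set.Ioi 0)).const_mul (-3*b^4 - 12*c*b^2)
  have h2 := (int_powbase hb 1).const_mul (2*b^6 + 18*c*b^4)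
  have h3 := (int_powbase hb 2).const_mul (8*c*b^6)
  refine ((h1.add h2).sub h3).congr ?_
  filter_upwards with s
  simp only [Pi.add_apply, Pi.sub_apply, pat, div_eq_mul_inv]

lemma tendsto_sdiv {b : ℝ} (hb : 0 < b) (k : ℕ) :
    Tendsto (fun s : ℝ => s / (s^2+b^2)^(k+1)) atTop (𝓝 0) := by
  refine squeeze_zero_norm' ?_ tendsto_inv_atTop_zero
  filter_upwards [eventually_ge_atTop 1] with s hs
  have hs0 : (0:ℝ) < s := lt_of_lt_of_le one_pos hs
  have hm : (0:ℝ) < s^2+b^2 := by positivity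
  rw [Real.norm_eq_abs, abs_of_nonneg (by positivity : (0:ℝ) ≤ s / (s^2+b^2)^(k+1))]
  have h1 : s^2 ≤ (s^2+b^2)^(k+1) := by
    calc s^2 ≤ s^2+b^2 := by nlinarith
    _ ≤ (s^2+b^2)^(k+1) := le_self_pow₀ (by nlinarith) (Nat.succ_ne_zero k)
  calc s / (s^2+b^2)^(k+1) ≤ s / s^2 := by
        apply div_le_div_of_nonneg_left hs0.le (by positivity) h1
  _ = s⁻¹ := by field_simp

lemma K_pos {b : ℝ} (hb : 0 < b) (c : ℝ) :
    ∫ s in Ioi (0:ℝ), pat b c s = -π * (b^3 + 3*c*b) := by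
  have hm : ∀ s : ℝ, (0:ℝ) < s^2+b^2 := fun s => by positivity
  set A : ℝ → ℝ := fun s => (-2*b^3-6*c*b) * Real.arctan (s/b)
    + (b^4+6*c*b^2) * (s/(s^2+b^2)) + (-2*c*b^4) * (s/(s^2+b^2)^2) with hA
  have hderiv : ∀ x ∈ Ici (0:ℝ), HasDerivAt A (pat b c x) x := by
    intro x _
    have hq : HasDerivAt (fun s : ℝ => s^2+b^2) (2*x) x := by
      simpa using (hasDerivAt_pow 2 x).add_const (b^2)
    have hq2 : HasDerivAt (fun s : ℝ => (s^2+b^2)^2) (2*(x^2+b^2)^1*(2*x)) x := by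
      simpa using hq.fun_pow 2
    have h2 : HasDerivAt (fun s : ℝ => s/(s^2+b^2))
        ((1*(x^2+b^2) - x*(2*x))/(x^2+b^2)^2) x :=
      (hasDerivAt_id x).div hq (hm x).ne'
    have h3 : HasDerivAt (fun s : ℝ => s/(s^2+b^2)^2)
        ((1*((x^2+b^2)^2) - x*(2*(x^2+b^2)^1*(2*x)))/((x^2+b^2)^2)^2) x :=
      (hasDerivAt_id x).div hq2 (by positivity)
    have harc := (hd_arctan hb.ne' x).const_mul (-2*b^3-6*c*b)
    have := (harc.add (h2.const_mul (b^4+6*c*b^2))).add (h3.const_mul (-2*c*b^4))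
    exact this.congr_deriv (by
      simp only [pat]
      field_simp
      ring)
  have htend : Tendsto A atTop (𝓝 ((-2*b^3-6*c*b) * (π/2) + (b^4+6*c*b^2) * 0
      + (-2*c*b^4) * 0)) := by
    refine (Tendsto.add ?_ ?_).add ?_
    · exact (((Real.tendsto_arctan_atTop.mono_right nhdsWithin_le_nhds).comp
        (tendsto_id.atTop_div_const hb))).const_mul _
    · exact (by simpa using tendsto_sdiv hb 0 : Tendsto (fun s : ℝ => s/(s^2+b^2)) atTop (𝓝 0)).const_mul _
    · exact (tendsto_sdiv hb 1).const_mul _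
  have key := integral_Ioi_of_hasDerivAt_of_tendsto' hderiv (int_pat hb c) htend
  rw [key, hA]
  simp [Real.arctan_zero]
  ring

end HProof5

namespace HProof6
open HProof HProof5

lemma int_pat' {b : ℝ} (hb : 0 ≤ b) (c : ℝ) : IntegrableOn (pat b c) (Set.Ioi 0) := by
  rcases hb.eq_or_lt with h | h
  · have : pat b c = fun _ => (0:ℝ) := by
      funext s; simp [pat, ← h]
    rw [this]
    exact integrableOn_zero
  · exact int_pat h c

lemma K' {b : ℝ} (hb : 0 ≤ b) (c : ℝ) :
    ∫ s in Ioi (0:ℝ), pat b c s = -π * (b^3 + 3*c*b) := by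
  rcases hb.eq_or_lt with h | h
  · have : pat b c = fun _ => (0:ℝ) := by
      funext s; simp [pat, ← h]
    rw [this]
    simp [← h]
  · exact K_pos h c

lemma gamma4 {t : ℝ} (ht : 0 < t) :
    ∫ s in Ioi (0:ℝ), s^3 * Real.exp (-(t*s)) = 6 / t^4 := by
  have key := Real.integral_rpow_mul_exp_neg_mul_Ioi (a := 4) (r := t) (by norm_num) ht
  have h1 : ∫ s in Ioi (0:ℝ), s^3 * Real.exp (-(t*s))
      = ∫ s in Ioi (0:ℝ), s ^ ((4:ℝ)-1) * Real.exp (-(t*s)) := by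
    refine setIntegral_congr_fun measurableSet_Ioi (fun s _ => ?_)
    rw [show ((4:ℝ)-1) = ((3:ℕ):ℝ) by norm_num, Real.rpow_natCast]
  rw [h1, key]
  have hg : Real.Gamma 4 = 6 := by
    rw [show (4:ℝ) = (3:ℕ)+1 by norm_num, Real.Gamma_nat_eq_factorial]
    norm_num [Nat.factorial]
  rw [hg, show ((1:ℝ)/t)^(4:ℝ) = ((1/t)^(4:ℕ) : ℝ) by
    rw [← Real.rpow_natCast (1/t) 4]; norm_num]
  field_simp

lemma int_absuv {a c : ℝ} (ha : 0 < a) :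
    IntegrableOn (fun t : ℝ =>
      |c * ((Real.sin t - t*Real.cos t) * (Real.sin (a*t) - a*t*Real.cos (a*t)))| * (6/t^4))
      (Set.Ioi 0) := by
  have hmeas : AEStronglyMeasurable (fun t : ℝ =>
      |c * ((Real.sin t - t*Real.cos t) * (Real.sin (a*t) - a*t*Real.cos (a*t)))| * (6/t^4))
      (volume.restrict (Set.Ioi 0)) := by
    apply Measurable.aestronglyMeasurable
    apply Measurable.mul
    · apply Measurable.abs
      fun_prop
    · apply Measurable.const_div
      fun_prop
  rw [show Set.Ioi (0:ℝ) = Set.Ioc 0 1 ∪ Set.Ioi 1 from (Set.Ioc_union_Ioi_eq_Ioi zero_le_one).symm]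
  refine IntegrableOn.union ?_ ?_
  · -- bounded by |c| * 6 * a^2 on (0,1]
    refine Integrable.mono (g := fun _ : ℝ => |c| * 6 * a^2)
      (integrable_const (|c| * 6 * a^2)) (hmeas.mono_measure
        (Measure.restrict_mono Set.Ioc_subset_Ioi_self le_rfl)) ?_
    filter_upwards [ae_restrict_mem measurableSet_Ioc] with t ht
    have ht0 : (0:ℝ) < t := ht.1
    have ht1 : t ≤ 1 := ht.2
    have hU : |Real.sin t - t*Real.cos t| ≤ t^2 := abs_u_le_sq t ht0.le
    have hV : |Real.sin (a*t) - a*t*Real.cos (a*t)| ≤ (a*t)^2 := abs_u_le_sq (a*t) (by positivity)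
    rw [Real.norm_eq_abs, Real.norm_eq_abs,
        abs_of_nonneg (by positivity : (0:ℝ) ≤ |c * ((Real.sin t - t*Real.cos t) * (Real.sin (a*t) - a*t*Real.cos (a*t)))| * (6/t^4))]
    calc |c * ((Real.sin t - t*Real.cos t) * (Real.sin (a*t) - a*t*Real.cos (a*t)))| * (6/t^4)
        ≤ (|c| * (t^2 * (a*t)^2)) * (6/t^4) := by
          rw [abs_mul, abs_mul]
          exact mul_le_mul_of_nonneg_right
            (mul_le_mul_of_nonneg_left
              (mul_le_mul hU hV (abs_nonneg _) (by positivity)) (abs_nonneg _))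
            (by positivity)
      _ = |c| * 6 * a^2 * (t^4/t^4) := by ring
      _ = |c| * 6 * a^2 := by rw [div_self (by positivity : (t:ℝ)^4 ≠ 0), mul_one]
      _ ≤ |(|c| * 6 * a^2)| := le_abs_self _
  · -- bounded by 12 |c| (1+a) / t^2 on (1,∞)
    have hbase : IntegrableOn (fun t : ℝ => (t^2)⁻¹) (Set.Ioi 1) := by
      have := integrableOn_Ioi_rpow_of_lt (by norm_num : (-2:ℝ) < -1) one_pos
      refine this.congr_fun (fun x hx => ?_) measurableSet_Ioi
      have hx0 : (0:ℝ) < x := lt_trans one_pos hx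
      beta_reduce
      rw [show (-2:ℝ) = -((2:ℕ):ℝ) by norm_num, Real.rpow_neg hx0.le, Real.rpow_natCast]
    refine Integrable.mono (hbase.const_mul (|c| * (12*(1+a)))) (hmeas.mono_measure
        (Measure.restrict_mono (Set.Ioi_subset_Ioi zero_le_one) le_rfl)) ?_
    filter_upwards [ae_restrict_mem measurableSet_Ioi] with t ht
    have ht1 : (1:ℝ) < t := ht
    have ht0 : (0:ℝ) < t := lt_trans one_pos ht1
    have hU : |Real.sin t - t*Real.cos t| ≤ 2*t := by
      have := abs_u_le_lin t
      rw [abs_of_pos ht0] at this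
      linarith
    have hV : |Real.sin (a*t) - a*t*Real.cos (a*t)| ≤ (1+a)*t := by
      have h1 : |Real.sin (a*t) - (a*t)*Real.cos (a*t)| ≤ 1 + |a*t| := abs_u_le_lin (a*t)
      rw [abs_of_pos (by positivity : (0:ℝ) < a*t)] at h1
      nlinarith
    rw [Real.norm_eq_abs, Real.norm_eq_abs,
        abs_of_nonneg (by positivity : (0:ℝ) ≤ |c * ((Real.sin t - t*Real.cos t) * (Real.sin (a*t) - a*t*Real.cos (a*t)))| * (6/t^4))]
    calc |c * ((Real.sin t - t*Real.cos t) * (Real.sin (a*t) - a*t*Real.cos (a*t)))| * (6/t^4)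
        ≤ (|c| * ((2*t) * ((1+a)*t))) * (6/t^4) := by
          rw [abs_mul, abs_mul]
          exact mul_le_mul_of_nonneg_right
            (mul_le_mul_of_nonneg_left
              (mul_le_mul hU hV (abs_nonneg _) (by positivity)) (abs_nonneg _))
            (by positivity)
      _ = |c| * (12*(1+a)) * (t^2)⁻¹ := by field_simp; ring
      _ ≤ |(|c| * (12*(1+a))) * (t^2)⁻¹| := le_abs_self _

end HProof6

namespace HProof7
open HProof HProof4 HProof5 HProof6

lemma prod_integrable {a : ℝ} (ha : 0 < a) :
    Integrable (Function.uncurry (fun t s : ℝ =>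
      (3/(2*a^3) * ((Real.sin t - t*Real.cos t) * (Real.sin (a*t) - a*t*Real.cos (a*t))))
        * (s^3 * Real.exp (-(s*t)))))
      ((volume.restrict (Set.Ioi 0)).prod (volume.restrict (Set.Ioi 0))) := by
  have hmeas : AEStronglyMeasurable (Function.uncurry (fun t s : ℝ =>
      (3/(2*a^3) * ((Real.sin t - t*Real.cos t) * (Real.sin (a*t) - a*t*Real.cos (a*t))))
        * (s^3 * Real.exp (-(s*t)))))
      ((volume.restrict (Set.Ioi 0)).prod (volume.restrict (Set.Ioi 0))) := by
    apply Continuous.aestronglyMeasurable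
    show Continuous fun z : ℝ × ℝ =>
      (3/(2*a^3) * ((Real.sin z.1 - z.1*Real.cos z.1)
        * (Real.sin (a*z.1) - a*z.1*Real.cos (a*z.1)))) * (z.2^3 * Real.exp (-(z.2*z.1)))
    fun_prop
  rw [integrable_prod_iff hmeas]
  constructor
  · filter_upwards [ae_restrict_mem measurableSet_Ioi] with t ht
    have ht0 : (0:ℝ) < t := ht
    have base := (int_pow_exp 3 ht0).const_mul
      (3/(2*a^3) * ((Real.sin t - t*Real.cos t) * (Real.sin (a*t) - a*t*Real.cos (a*t))))
    refine base.congr ?_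
    filter_upwards with s
    simp only [Function.uncurry_apply_pair]
    rw [show -(t*s) = -(s*t) by ring]
  · refine (int_absuv (a := a) (c := 3/(2*a^3)) ha).congr ?_
    filter_upwards [ae_restrict_mem measurableSet_Ioi] with t ht
    have ht0 : (0:ℝ) < t := ht
    have h1 : ∫ s in Set.Ioi (0:ℝ),
        ‖(3/(2*a^3) * ((Real.sin t - t*Real.cos t) * (Real.sin (a*t) - a*t*Real.cos (a*t))))
          * (s^3 * Real.exp (-(s*t)))‖
        = ∫ s in Set.Ioi (0:ℝ),
          |3/(2*a^3) * ((Real.sin t - t*Real.cos t) * (Real.sin (a*t) - a*t*Real.cos (a*t)))|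
            * (s^3 * Real.exp (-(t*s))) := by
      refine setIntegral_congr_fun measurableSet_Ioi (fun s hs => ?_)
      have hs0 : (0:ℝ) < s := hs
      rw [Real.norm_eq_abs, abs_mul, show -(s*t) = -(t*s) by ring,
          abs_of_nonneg (by positivity : (0:ℝ) ≤ s^3 * Real.exp (-(t*s)))]
    simp only [Function.uncurry_apply_pair]
    rw [h1, integral_const_mul, gamma4 ht0]

lemma core {a : ℝ} (ha : 0 < a) :
    ∫ t in Set.Ioi (0:ℝ),
      3*(Real.sin t - t*Real.cos t)/t^3 * (3*(Real.sin (a*t) - a*t*Real.cos (a*t))/(a*t)^3) * t^2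
      = 3*π/(2*(max a 1)^3) := by
  have ha0 : a ≠ 0 := ha.ne'
  have ipat1 : IntegrableOn (pat (1-a) a) (Set.Ioi 0) := by
    rcases le_total a 1 with h | h
    · exact int_pat' (by linarith) a
    · have e : pat (1-a) a = pat (a-1) a := funext fun s => by
        rw [show (1-a : ℝ) = -(a-1) by ring, pat_neg]
      rw [e]; exact int_pat' (by linarith) a
  have ipat2 : IntegrableOn (pat (1+a) (-a)) (Set.Ioi 0) := int_pat' (by linarith) (-a)
  calc ∫ t in Set.Ioi (0:ℝ),
      3*(Real.sin t - t*Real.cos t)/t^3 * (3*(Real.sin (a*t) - a*t*Real.cos (a*t))/(a*t)^3) * t^2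
      = ∫ t in Set.Ioi (0:ℝ),
        (3/(2*a^3) * ((Real.sin t - t*Real.cos t) * (Real.sin (a*t) - a*t*Real.cos (a*t))))
          * (6/t^4) := by
        refine setIntegral_congr_fun measurableSet_Ioi (fun t ht => ?_)
        have ht0 : (0:ℝ) < t := ht
        field_simp
        ring
    _ = ∫ t in Set.Ioi (0:ℝ), ∫ s in Set.Ioi (0:ℝ),
        (3/(2*a^3) * ((Real.sin t - t*Real.cos t) * (Real.sin (a*t) - a*t*Real.cos (a*t))))
          * (s^3 * Real.exp (-(s*t))) := by
        refine setIntegral_congr_fun measurableSet_Ioi (fun t ht => ?_)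
        have ht0 : (0:ℝ) < t := ht
        rw [integral_const_mul]
        have h2 : ∫ s in Set.Ioi (0:ℝ), s^3 * Real.exp (-(s*t)) = 6/t^4 := by
          rw [← gamma4 ht0]
          refine setIntegral_congr_fun measurableSet_Ioi (fun s _ => ?_)
          rw [show -(s*t) = -(t*s) by ring]
        rw [h2]
    _ = ∫ s in Set.Ioi (0:ℝ), ∫ t in Set.Ioi (0:ℝ),
        (3/(2*a^3) * ((Real.sin t - t*Real.cos t) * (Real.sin (a*t) - a*t*Real.cos (a*t))))
          * (s^3 * Real.exp (-(s*t))) := integral_integral_swap (prod_integrable ha)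
    _ = ∫ s in Set.Ioi (0:ℝ), (3/(4*a^3)) * (pat (1-a) a s - pat (1+a) (-a) s) := by
        refine setIntegral_congr_fun measurableSet_Ioi (fun s hs => ?_)
        have hs0 : (0:ℝ) < s := hs
        have h3 : ∫ t in Set.Ioi (0:ℝ),
            (3/(2*a^3) * ((Real.sin t - t*Real.cos t) * (Real.sin (a*t) - a*t*Real.cos (a*t))))
              * (s^3 * Real.exp (-(s*t)))
            = ∫ t in Set.Ioi (0:ℝ), (3/(2*a^3)*s^3) * (Real.exp (-(s*t))
              * ((Real.sin t - t*Real.cos t) * (Real.sin (a*t) - a*t*Real.cos (a*t)))) := by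
          refine setIntegral_congr_fun measurableSet_Ioi (fun t _ => ?_)
          ring
        rw [h3, integral_const_mul, Linner hs0 a]
        have hm1 : (0:ℝ) < s^2+(1-a)^2 := by positivity
        have hm2 : (0:ℝ) < s^2+(1+a)^2 := by positivity
        simp only [pat]
        field_simp
        ring
    _ = (3/(4*a^3)) * ((∫ s in Set.Ioi (0:ℝ), pat (1-a) a s)
        - ∫ s in Set.Ioi (0:ℝ), pat (1+a) (-a) s) := by
        rw [integral_const_mul, integral_sub ipat1 ipat2]
    _ = 3*π/(2*(max a 1)^3) := by
        rcases le_total a 1 with h | h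
        · rw [K' (by linarith : (0:ℝ) ≤ 1-a) a, K' (by linarith : (0:ℝ) ≤ 1+a) (-a),
              max_eq_right h]
          field_simp
          ring
        · rw [show pat (1-a) a = pat (a-1) a from funext fun s => by
            rw [show (1-a : ℝ) = -(a-1) by ring, pat_neg]]
          rw [K' (by linarith : (0:ℝ) ≤ a-1) a, K' (by linarith : (0:ℝ) ≤ 1+a) (-a),
              max_eq_left h]
          field_simp
          ring

end HProof7

/-- With `h t = 3(sin t − t cos t)/t³`, for every `a > 0`,
`∫₀^∞ h(t) h(at) t² dt = 3π / (2 max(a,1)³)`. -/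
theorem integral_h_mul_h_scaled (h : ℝ → ℝ)
    (hh : ∀ t : ℝ, t ≠ 0 → h t = 3 * (Real.sin t - t * Real.cos t) / t ^ 3)
    (a : ℝ) (ha : 0 < a) :
    ∫ t in Set.Ioi (0 : ℝ), h t * h (a * t) * t ^ 2 = 3 * π / (2 * (max a 1) ^ 3) := by
  have key := HProof7.core ha
  rw [← key]
  refine setIntegral_congr_fun measurableSet_Ioi (fun t ht => ?_)
  have ht0 : (0:ℝ) < t := ht
  rw [hh t ht0.ne', hh (a*t) (by positivity)]
end
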